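/- arXiv:2307.10242 — 2 statements merged into one kernel-verified Lean document; each statement's English description precedes it below -/
import Mathlib

section
/- Linear homotopy perturbation lemma: Let (L, δ) be a cochain complex with a contraction η (η² = 0, ηδη = η), let H = ker(δη) ∩ ker(ηδ) with inclusion ι : H → L and projection π = 1 − δη − ηδ : L → H, and let λ : L → L be a degree +1 map such that (δ + λ)² = 0 and ηλ is nilpotent. Set μ = πλ(1+ηλ)⁻¹ι, φ = (1+ηλ)⁻¹ι, π̃ = π(1+λη)⁻¹, and η̃ = η(1+λη)⁻¹. Then: (a) (δ + μ)² = 0 on H; (b) φ is a chain map from (H, δ+μ) to (L, δ+λ) and π̃ is a chain map from (L, δ+λ) to (H, δ+μ); (c) π̃φ = id_H; (d) φπ̃ = id_L − (δ+λ)η̃ − η̃(δ+λ). -/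
/-- Linear homotopy perturbation lemma: given a contraction `η` of `(L, δ)`,
`H = ker(δη) ∩ ker(ηδ)` with inclusion `ι` and projection `π` (with
`ι ∘ π = 1 − δη − ηδ`), and a perturbation `λ` of degree `+1` with
`(δ+λ)² = 0` and `ηλ` nilpotent, setting `μ = πλ(1+ηλ)⁻¹ι`, `φ = (1+ηλ)⁻¹ι`,
`π̃ = π(1+λη)⁻¹`, `η̃ = η(1+λη)⁻¹`, we have: (a) `(δ+μ)² = 0` on `H`;
(b) `φ` and `π̃` are chain maps; (c) `π̃φ = id`; (d) `φπ̃ = 1 − (δ+λ)η̃ − η̃(δ+λ)`. -/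
theorem stmt_5 {K : Type*} [Field K] {L : Type*} [AddCommGroup L] [Module K L]
    (δ η lam : Module.End K L)
    (hδ : δ * δ = 0) (hη : η * η = 0) (hηδη : η * δ * η = η)
    (hMC : (δ + lam) * (δ + lam) = 0) (hnil : IsNilpotent (η * lam))
    (H : Submodule K L)
    (hH : H = LinearMap.ker (δ * η) ⊓ LinearMap.ker (η * δ))
    (π : L →ₗ[K] H) (hπ : H.subtype ∘ₗ π = 1 - δ * η - η * δ)
    (δH : Module.End K H) (hδH : H.subtype ∘ₗ δH = δ ∘ₗ H.subtype) :
    letI ι : H →ₗ[K] L := H.subtype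
    letI φ : H →ₗ[K] L := (Ring.inverse (1 + η * lam) : Module.End K L) ∘ₗ ι
    letI μ : Module.End K H := π ∘ₗ (lam ∘ₗ φ)
    letI πt : L →ₗ[K] H := π ∘ₗ (Ring.inverse (1 + lam * η) : Module.End K L)
    letI ηt : Module.End K L := η * Ring.inverse (1 + lam * η)
    -- (a) the transferred differential squares to zero on H
    (δH + μ) * (δH + μ) = 0 ∧
    -- (b) φ and π̃ are chain maps
    φ ∘ₗ (δH + μ) = ((δ + lam) : Module.End K L) ∘ₗ φ ∧
    (δH + μ) ∘ₗ πt = πt ∘ₗ ((δ + lam) : Module.End K L) ∧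
    -- (c) π̃ ∘ φ = id on H
    πt ∘ₗ φ = LinearMap.id ∧
    -- (d) φ ∘ π̃ = 1 − (δ+λ)η̃ − η̃(δ+λ)
    (φ ∘ₗ πt : Module.End K L)
      = 1 - (δ + lam) * ηt - ηt * (δ + lam) := by
  -- notation
  set A : Module.End K L := Ring.inverse (1 + η * lam) with hAdef0
  set B : Module.End K L := Ring.inverse (1 + lam * η) with hBdef0
  set p : Module.End K L := 1 - δ * η - η * δ with hpdef
  -- units
  have hUA : IsUnit (1 + η * lam) := hnil.isUnit_one_add
  have hnil' : IsNilpotent (lam * η) := by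
    obtain ⟨n, hn⟩ := hnil
    refine ⟨n + 1, ?_⟩
    have hsc : lam * (η * lam) ^ n = (lam * η) ^ n * lam :=
      (SemiconjBy.pow_right (by simp [SemiconjBy, mul_assoc]) n)
    calc (lam * η) ^ (n + 1) = ((lam * η) ^ n * lam) * η := by rw [pow_succ, mul_assoc]
    _ = (lam * (η * lam) ^ n) * η := by rw [hsc]
    _ = 0 := by rw [hn, mul_zero, zero_mul]
  have hUB : IsUnit (1 + lam * η) := hnil'.isUnit_one_add
  have hA1 : A * (1 + η * lam) = 1 := Ring.inverse_mul_cancel _ hUA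
  have hA2 : (1 + η * lam) * A = 1 := Ring.mul_inverse_cancel _ hUA
  have hB1 : B * (1 + lam * η) = 1 := Ring.inverse_mul_cancel _ hUB
  have hB2 : (1 + lam * η) * B = 1 := Ring.mul_inverse_cancel _ hUB
  -- basic consequences
  have hAe : (η * lam) * A = 1 - A := by
    calc (η * lam) * A = (1 + η * lam) * A - A := by noncomm_ring
    _ = 1 - A := by rw [hA2]
  have hAe' : A * (η * lam) = 1 - A := by
    calc A * (η * lam) = A * (1 + η * lam) - A := by noncomm_ring
    _ = 1 - A := by rw [hA1]
  have hBe : (lam * η) * B = 1 - B := by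
    calc (lam * η) * B = (1 + lam * η) * B - B := by noncomm_ring
    _ = 1 - B := by rw [hB2]
  have hBe' : B * (lam * η) = 1 - B := by
    calc B * (lam * η) = B * (1 + lam * η) - B := by noncomm_ring
    _ = 1 - B := by rw [hB1]
  have hAdef : A = 1 - (η * lam) * A := by rw [hAe]; noncomm_ring
  have hlamA : lam * A = B * lam := by
    have h1 : (1 + lam * η) * (lam * A) = lam := by
      calc (1 + lam * η) * (lam * A) = lam * ((1 + η * lam) * A) := by noncomm_ring
      _ = lam := by rw [hA2, mul_one]
    calc lam * A = (B * (1 + lam * η)) * (lam * A) := by rw [hB1, one_mul]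
    _ = B * ((1 + lam * η) * (lam * A)) := by rw [mul_assoc]
    _ = B * lam := by rw [h1]
  have hηB : η * B = A * η := by
    have h1 : (1 + η * lam) * (η * B) = η := by
      calc (1 + η * lam) * (η * B) = η * ((1 + lam * η) * B) := by noncomm_ring
      _ = η := by rw [hB2, mul_one]
    calc η * B = (A * (1 + η * lam)) * (η * B) := by rw [hA1, one_mul]
    _ = A * ((1 + η * lam) * (η * B)) := by rw [mul_assoc]
    _ = A * η := by rw [h1]
  have hBη : B * η = η := by
    have h1 : (1 + lam * η) * η = η := by
      calc (1 + lam * η) * η = η + lam * (η * η) := by noncomm_ring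
      _ = η := by rw [hη, mul_zero, add_zero]
    calc B * η = (B * (1 + lam * η)) * η - B * ((1 + lam * η) * η - η) := by noncomm_ring
    _ = η := by rw [h1, hB1, one_mul, sub_self, mul_zero, sub_zero]
  -- Maurer-Cartan consequences
  have hmc : lam * δ = -(δ * lam) - lam * lam := by
    have h : (δ + lam) * (δ + lam) - δ * δ = δ * lam + lam * δ + lam * lam := by noncomm_ring
    rw [hMC, hδ, sub_zero] at h
    calc lam * δ = (δ * lam + lam * δ + lam * lam) - δ * lam - lam * lam := by noncomm_ring
    _ = -(δ * lam) - lam * lam := by rw [← h]; noncomm_ring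
  -- p facts
  have hpη : p * η = 0 := by
    calc p * η = η - δ * (η * η) - η * δ * η := by rw [hpdef]; noncomm_ring
    _ = 0 := by rw [hη, hηδη, mul_zero, sub_zero, sub_self]
  have hηp : η * p = 0 := by
    calc η * p = η - η * δ * η - (η * η) * δ := by rw [hpdef]; noncomm_ring
    _ = 0 := by rw [hη, hηδη, zero_mul, sub_zero, sub_self]
  have hpδ : p * δ = δ * p := by
    have h : p * δ - δ * p = (δ * δ) * η - η * (δ * δ) := by rw [hpdef]; noncomm_ring
    rw [hδ, zero_mul, mul_zero, sub_zero] at h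
    exact sub_eq_zero.mp h
  have hpp : p * p = p := by
    have h : p * p - p = δ * (η * δ * η) - δ * η + (η * δ * η) * δ - η * δ
        + δ * (η * η) * δ + η * (δ * δ) * η := by rw [hpdef]; noncomm_ring
    rw [hη, hδ, hηδη, mul_zero, zero_mul, mul_zero, zero_mul, add_zero, add_zero] at h
    have h2 : p * p - p = 0 := by rw [h]; noncomm_ring
    exact sub_eq_zero.mp h2
  have hpA : p * A = p := by
    have h : p * A - p = -((p * η) * (lam * A)) := by
      calc p * A - p = p * A - p * ((1 + η * lam) * A) := by rw [hA2, mul_one]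
      _ = -((p * η) * (lam * A)) := by noncomm_ring
    rw [hpη, zero_mul, neg_zero] at h
    exact sub_eq_zero.mp h
  have hBp : B * p = p := by
    have h : B * p - p = -((B * lam) * (η * p)) := by
      calc B * p - p = B * p - (B * (1 + lam * η)) * p := by rw [hB1, one_mul]
      _ = -((B * lam) * (η * p)) := by noncomm_ring
    rw [hηp, mul_zero, neg_zero] at h
    exact sub_eq_zero.mp h
  -- key ring identities
  have hmc2 : δ * lam = -(lam * δ) - lam * lam := by rw [hmc]; noncomm_ring
  have I1 : A * p * lam * A = δ * A - A * δ + lam * A := by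
    calc A * p * lam * A
        = A * lam * A - A * δ * ((η * lam) * A) - A * η * ((δ * lam) * A) := by
          rw [hpdef]; noncomm_ring
    _ = A * lam * A - A * δ * (1 - A) - A * η * ((-(lam * δ) - lam * lam) * A) := by
          rw [hAe, hmc2]
    _ = A * lam * A - A * δ * (1 - A) + (A * (η * lam)) * (δ * A)
          + (A * (η * lam)) * (lam * A) := by noncomm_ring
    _ = A * lam * A - A * δ * (1 - A) + (1 - A) * (δ * A) + (1 - A) * (lam * A) := by
          rw [hAe']
    _ = δ * A - A * δ + lam * A := by noncomm_ring
  have I2 : B * lam * p * B = B * δ + B * lam - δ * B := by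
    calc B * lam * p * B
        = B * lam * B - B * ((lam * δ) * (η * B)) - (B * (lam * η)) * (δ * B) := by
          rw [hpdef]; noncomm_ring
    _ = B * lam * B - B * ((-(δ * lam) - lam * lam) * (η * B)) - (1 - B) * (δ * B) := by
          rw [hmc, hBe']
    _ = B * lam * B + B * δ * ((lam * η) * B) + B * lam * ((lam * η) * B)
          - (1 - B) * (δ * B) := by noncomm_ring
    _ = B * lam * B + B * δ * (1 - B) + B * lam * (1 - B) - (1 - B) * (δ * B) := by
          rw [hBe]
    _ = B * δ + B * lam - δ * B := by noncomm_ring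
  have E1 : A * (δ + p * (lam * A)) = (δ + lam) * A := by
    have h : A * p * lam * A = A * (p * (lam * A)) := by noncomm_ring
    rw [← h] at *
    calc A * (δ + p * (lam * A)) = A * δ + A * p * lam * A := by noncomm_ring
    _ = A * δ + (δ * A - A * δ + lam * A) := by rw [I1]
    _ = (δ + lam) * A := by noncomm_ring
  have E2 : (δ + p * (lam * A)) * (p * B) = (p * B) * (δ + lam) := by
    have h1 : p * (lam * A) * (p * B) = p * (B * δ + B * lam - δ * B) := by
      calc p * (lam * A) * (p * B) = p * ((lam * A) * (p * B)) := by noncomm_ring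
      _ = p * ((B * lam) * (p * B)) := by rw [hlamA]
      _ = p * (B * lam * p * B) := by noncomm_ring
      _ = p * (B * δ + B * lam - δ * B) := by rw [I2]
    calc (δ + p * (lam * A)) * (p * B)
        = (δ * p) * B + p * (lam * A) * (p * B) := by noncomm_ring
    _ = (p * δ) * B + p * (B * δ + B * lam - δ * B) := by rw [← hpδ, h1]
    _ = (p * B) * (δ + lam) := by noncomm_ring
  have E3 : p * B * A * p = p := by
    have h1 : p * B * A * p = p * B * p - (p * (B * η)) * ((lam * A) * p) := by
      conv_lhs => rw [hAdef]
      noncomm_ring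
    rw [hBη, hpη, zero_mul, sub_zero] at h1
    rw [h1, mul_assoc, hBp, hpp]
  have hlamAeta : lam * (A * η) = 1 - B := by
    calc lam * (A * η) = (lam * A) * η := by rw [mul_assoc]
    _ = (B * lam) * η := by rw [hlamA]
    _ = B * (lam * η) := by rw [mul_assoc]
    _ = 1 - B := hBe'
  have hAetalam : (A * η) * lam = 1 - A := by
    calc (A * η) * lam = A * (η * lam) := by rw [mul_assoc]
    _ = 1 - A := hAe'
  have hK : A * δ * (A * η) = δ * (A * η) + (A * η) * δ - (A * η) * (δ * B)
      + (A - 1) * (B - 1) := by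
    calc A * δ * (A * η) = δ * (A * η) + (A - 1) * (δ * (A * η)) := by noncomm_ring
    _ = δ * (A * η) - ((A * η) * lam) * (δ * (A * η)) := by rw [hAetalam]; noncomm_ring
    _ = δ * (A * η) - (A * η) * ((lam * δ) * (A * η)) := by noncomm_ring
    _ = δ * (A * η) - (A * η) * ((-(δ * lam) - lam * lam) * (A * η)) := by rw [hmc]
    _ = δ * (A * η) + (A * η) * δ * (lam * (A * η))
          + ((A * η) * lam) * (lam * (A * η)) := by noncomm_ring
    _ = δ * (A * η) + (A * η) * δ * (1 - B) + (1 - A) * (1 - B) := by rw [hlamAeta, hAetalam]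
    _ = δ * (A * η) + (A * η) * δ - (A * η) * (δ * B) + (A - 1) * (B - 1) := by
          noncomm_ring
  have I4 : A * p * B = 1 - (δ + lam) * (A * η) - (A * η) * (δ + lam) := by
    calc A * p * B = A * B - A * δ * (η * B) - (A * η) * (δ * B) := by
          rw [hpdef]; noncomm_ring
    _ = A * B - A * δ * (A * η) - (A * η) * (δ * B) := by rw [hηB]
    _ = A * B - (δ * (A * η) + (A * η) * δ - (A * η) * (δ * B) + (A - 1) * (B - 1))
          - (A * η) * (δ * B) := by rw [hK]
    _ = 1 - δ * (A * η) - (1 - B) - (A * η) * δ - (1 - A) := by noncomm_ring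
    _ = 1 - δ * (A * η) - lam * (A * η) - (A * η) * δ - (A * η) * lam := by
          rw [hlamAeta, hAetalam]
    _ = 1 - (δ + lam) * (A * η) - (A * η) * (δ + lam) := by noncomm_ring
  have E4 : A * p * B = 1 - (δ + lam) * (η * B) - (η * B) * (δ + lam) := by
    rw [hηB]; exact I4
  -- transfer machinery
  have hinj : Function.Injective H.subtype := H.injective_subtype
  have hcancel : ∀ {M : Type _} [AddCommGroup M] [Module K M] (f g : M →ₗ[K] H),
      H.subtype ∘ₗ f = H.subtype ∘ₗ g → f = g := by
    intro M _ _ f g h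
    ext x
    exact LinearMap.congr_fun h x
  have hpι : p ∘ₗ H.subtype = H.subtype := by
    ext x
    have hx : (x : L) ∈ LinearMap.ker (δ * η) ⊓ LinearMap.ker (η * δ) := by
      rw [← hH]; exact x.2
    obtain ⟨h1, h2⟩ := Submodule.mem_inf.mp hx
    have e1 : (δ * η) (x : L) = 0 := LinearMap.mem_ker.mp h1
    have e2 : (η * δ) (x : L) = 0 := LinearMap.mem_ker.mp h2
    simp only [hpdef, LinearMap.comp_apply, Submodule.coe_subtype, LinearMap.sub_apply,
      Module.End.one_apply, e1, e2, sub_zero]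
  have hπι : π ∘ₗ H.subtype = LinearMap.id := by
    apply hcancel
    rw [← LinearMap.comp_assoc, hπ, hpι, LinearMap.comp_id]
  -- composed facts
  have F1 : H.subtype ∘ₗ (δH + π ∘ₗ (lam ∘ₗ (A ∘ₗ H.subtype))) = ((δ + p * (lam * A)) : Module.End K L) ∘ₗ H.subtype := by
    have hμ : H.subtype ∘ₗ (π ∘ₗ (lam ∘ₗ (A ∘ₗ H.subtype))) = (p * (lam * A)) ∘ₗ H.subtype := by
      show H.subtype ∘ₗ (π ∘ₗ (lam ∘ₗ (A ∘ₗ H.subtype))) = (p * (lam * A)) ∘ₗ H.subtype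
      rw [← LinearMap.comp_assoc, hπ]
      rfl
    rw [LinearMap.comp_add, hδH, hμ, LinearMap.add_comp]
  have F2 : H.subtype ∘ₗ (π ∘ₗ B) = ((p * B : Module.End K L) : L →ₗ[K] L) := by
    show H.subtype ∘ₗ (π ∘ₗ B) = (p * B : Module.End K L)
    rw [← LinearMap.comp_assoc, hπ]
    rfl
  -- (b1)
  have hb1 : (A ∘ₗ H.subtype) ∘ₗ (δH + π ∘ₗ (lam ∘ₗ (A ∘ₗ H.subtype))) = ((δ + lam) : Module.End K L) ∘ₗ (A ∘ₗ H.subtype) := by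
    show (A ∘ₗ H.subtype) ∘ₗ (δH + π ∘ₗ (lam ∘ₗ (A ∘ₗ H.subtype))) = ((δ + lam) : Module.End K L) ∘ₗ (A ∘ₗ H.subtype)
    calc (A ∘ₗ H.subtype) ∘ₗ (δH + π ∘ₗ (lam ∘ₗ (A ∘ₗ H.subtype))) = A ∘ₗ (H.subtype ∘ₗ (δH + π ∘ₗ (lam ∘ₗ (A ∘ₗ H.subtype)))) :=
          LinearMap.comp_assoc _ _ _
    _ = A ∘ₗ (((δ + p * (lam * A)) : Module.End K L) ∘ₗ H.subtype) := by rw [F1]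
    _ = (A * (δ + p * (lam * A))) ∘ₗ H.subtype := rfl
    _ = ((δ + lam) * A) ∘ₗ H.subtype := by rw [E1]
    _ = ((δ + lam) : Module.End K L) ∘ₗ (A ∘ₗ H.subtype) := rfl
  -- (b2)
  have hb2 : (δH + π ∘ₗ (lam ∘ₗ (A ∘ₗ H.subtype))) ∘ₗ (π ∘ₗ B) = (π ∘ₗ B) ∘ₗ ((δ + lam) : Module.End K L) := by
    apply hcancel
    calc H.subtype ∘ₗ ((δH + π ∘ₗ (lam ∘ₗ (A ∘ₗ H.subtype))) ∘ₗ (π ∘ₗ B)) = (H.subtype ∘ₗ (δH + π ∘ₗ (lam ∘ₗ (A ∘ₗ H.subtype)))) ∘ₗ (π ∘ₗ B) :=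
          (LinearMap.comp_assoc _ _ _).symm
    _ = (((δ + p * (lam * A)) : Module.End K L) ∘ₗ H.subtype) ∘ₗ (π ∘ₗ B) := by rw [F1]
    _ = ((δ + p * (lam * A)) : Module.End K L) ∘ₗ (H.subtype ∘ₗ (π ∘ₗ B)) :=
          LinearMap.comp_assoc _ _ _
    _ = (δ + p * (lam * A)) * (p * B) := by rw [F2]; rfl
    _ = (p * B) * (δ + lam) := E2
    _ = (H.subtype ∘ₗ (π ∘ₗ B)) ∘ₗ ((δ + lam) : Module.End K L) := by rw [F2]; rfl
    _ = H.subtype ∘ₗ ((π ∘ₗ B) ∘ₗ ((δ + lam) : Module.End K L)) := LinearMap.comp_assoc _ _ _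
  -- (c)
  have hc : (π ∘ₗ B) ∘ₗ (A ∘ₗ H.subtype) = LinearMap.id := by
    apply hcancel
    calc H.subtype ∘ₗ ((π ∘ₗ B) ∘ₗ (A ∘ₗ H.subtype)) = (H.subtype ∘ₗ (π ∘ₗ B)) ∘ₗ (A ∘ₗ H.subtype) :=
          (LinearMap.comp_assoc _ _ _).symm
    _ = ((p * B : Module.End K L) : L →ₗ[K] L) ∘ₗ (A ∘ₗ H.subtype) := by rw [F2]
    _ = (p * B * A) ∘ₗ H.subtype := rfl
    _ = (p * B * A) ∘ₗ (p ∘ₗ H.subtype) := by rw [hpι]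
    _ = (p * B * A * p) ∘ₗ H.subtype := rfl
    _ = p ∘ₗ H.subtype := by rw [E3]
    _ = H.subtype := hpι
    _ = H.subtype ∘ₗ LinearMap.id := (LinearMap.comp_id _).symm
  -- (d)
  have hd : ((A ∘ₗ H.subtype) ∘ₗ (π ∘ₗ B) : Module.End K L) = 1 - (δ + lam) * (η * B) - (η * B) * (δ + lam) := by
    show ((A ∘ₗ H.subtype) ∘ₗ (π ∘ₗ B) : Module.End K L)
        = 1 - (δ + lam) * (η * B) - (η * B) * (δ + lam)
    calc ((A ∘ₗ H.subtype) ∘ₗ (π ∘ₗ B) : Module.End K L)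
        = A ∘ₗ ((H.subtype ∘ₗ π) ∘ₗ B) := by
          rw [LinearMap.comp_assoc, LinearMap.comp_assoc]
    _ = A * (p * B) := by rw [hπ]; rfl
    _ = A * p * B := by rw [mul_assoc]
    _ = 1 - (δ + lam) * (η * B) - (η * B) * (δ + lam) := E4
  -- (a)
  have ha : (δH + π ∘ₗ (lam ∘ₗ (A ∘ₗ H.subtype))) * (δH + π ∘ₗ (lam ∘ₗ (A ∘ₗ H.subtype))) = 0 := by
    calc (δH + π ∘ₗ (lam ∘ₗ (A ∘ₗ H.subtype))) * (δH + π ∘ₗ (lam ∘ₗ (A ∘ₗ H.subtype))) = (δH + π ∘ₗ (lam ∘ₗ (A ∘ₗ H.subtype))) ∘ₗ (δH + π ∘ₗ (lam ∘ₗ (A ∘ₗ H.subtype))) := rfl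
    _ = (δH + π ∘ₗ (lam ∘ₗ (A ∘ₗ H.subtype))) ∘ₗ (((π ∘ₗ B) ∘ₗ (A ∘ₗ H.subtype)) ∘ₗ (δH + π ∘ₗ (lam ∘ₗ (A ∘ₗ H.subtype)))) := by rw [hc, LinearMap.id_comp]
    _ = ((δH + π ∘ₗ (lam ∘ₗ (A ∘ₗ H.subtype))) ∘ₗ (π ∘ₗ B)) ∘ₗ ((A ∘ₗ H.subtype) ∘ₗ (δH + π ∘ₗ (lam ∘ₗ (A ∘ₗ H.subtype)))) := by
          simp only [LinearMap.comp_assoc]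
    _ = ((π ∘ₗ B) ∘ₗ ((δ + lam) : Module.End K L)) ∘ₗ (((δ + lam) : Module.End K L) ∘ₗ (A ∘ₗ H.subtype)) := by
          rw [hb2, hb1]
    _ = (π ∘ₗ B) ∘ₗ (((δ + lam) * (δ + lam) : Module.End K L) ∘ₗ (A ∘ₗ H.subtype)) := by
          simp only [LinearMap.comp_assoc]; rfl
    _ = 0 := by rw [hMC]; ext x; simp
  exact ⟨ha, hb1, hb2, hc, hd⟩
end

section
/- Let 𝒞 be a category of fibrant objects and X an object of 𝒞. Suppose X →^{s} P_X →^{e} X × X and X →^{s'} P'_X →^{e'} X × X are two path space decompositions (s, s' weak equivalences, e, e' fibrations, with e∘s and e'∘s' equal to the diagonal). Then there exists an object P''_X together with a weak equivalence s'' : X → P''_X, trivial fibrations f₁ : P''_X → P_X and f₂ : P''_X → P'_X, and a fibration e'' : P''_X → X × X, such that f₁ ∘ s'' = s, f₂ ∘ s'' = s', e ∘ f₁ = e'' = e' ∘ f₂, and e'' ∘ s'' is the diagonal. -/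
open CategoryTheory CategoryTheory.Limits

universe v u

/-- A category of fibrant objects (Brown): a category with finite products and
a final object, with distinguished classes of fibrations and weak equivalences
satisfying Brown's axioms. -/
structure CategoryOfFibrantObjects (C : Type u) [Category.{v} C]
    [HasFiniteProducts C] where
  isFib : ∀ {X Y : C}, (X ⟶ Y) → Prop
  isWeq : ∀ {X Y : C}, (X ⟶ Y) → Prop
  /-- all isomorphisms are weak equivalences -/
  weq_of_iso : ∀ {X Y : C} (f : X ⟶ Y), IsIso f → isWeq f
  /-- two out of three -/
  weq_comp : ∀ {X Y Z : C} (f : X ⟶ Y) (g : Y ⟶ Z),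
    isWeq f → isWeq g → isWeq (f ≫ g)
  weq_right_of_comp : ∀ {X Y Z : C} (f : X ⟶ Y) (g : Y ⟶ Z),
    isWeq f → isWeq (f ≫ g) → isWeq g
  weq_left_of_comp : ∀ {X Y Z : C} (f : X ⟶ Y) (g : Y ⟶ Z),
    isWeq g → isWeq (f ≫ g) → isWeq f
  /-- all isomorphisms are fibrations, and fibrations compose -/
  fib_of_iso : ∀ {X Y : C} (f : X ⟶ Y), IsIso f → isFib f
  fib_comp : ∀ {X Y Z : C} (f : X ⟶ Y) (g : Y ⟶ Z),
    isFib f → isFib g → isFib (f ≫ g)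
  /-- base changes of fibrations exist -/
  base_change_exists : ∀ {X Y Z : C} (f : X ⟶ Z) (g : Y ⟶ Z), isFib g →
    ∃ (W : C) (p : W ⟶ X) (q : W ⟶ Y), IsPullback p q f g
  /-- base changes of fibrations are fibrations -/
  fib_base_change : ∀ {X Y Z : C} (f : X ⟶ Z) (g : Y ⟶ Z), isFib g →
    ∀ (W : C) (p : W ⟶ X) (q : W ⟶ Y), IsPullback p q f g → isFib p
  /-- base changes of trivial fibrations are trivial fibrations -/
  triv_fib_base_change : ∀ {X Y Z : C} (f : X ⟶ Z) (g : Y ⟶ Z),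
    isFib g → isWeq g →
    ∀ (W : C) (p : W ⟶ X) (q : W ⟶ Y), IsPullback p q f g → isWeq p
  /-- every object is fibrant -/
  all_fibrant : ∀ X : C, isFib (terminal.from X)
  /-- factorization: every morphism factors as a weak equivalence followed by
  a fibration -/
  factorization : ∀ {X Y : C} (f : X ⟶ Y),
    ∃ (Z : C) (w : X ⟶ Z) (p : Z ⟶ Y), isWeq w ∧ isFib p ∧ w ≫ p = f

/-- Any two path space decompositions of an object `X` in a category of fibrant
objects are dominated by a common third one via trivial fibrations. -/
theorem stmt_9 {C : Type u} [Category.{v} C] [HasFiniteProducts C]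
    (F : CategoryOfFibrantObjects C) (X P P' : C)
    (s : X ⟶ P) (e : P ⟶ X ⨯ X) (s' : X ⟶ P') (e' : P' ⟶ X ⨯ X)
    (hs : F.isWeq s) (he : F.isFib e)
    (hse : s ≫ e = prod.lift (𝟙 X) (𝟙 X))
    (hs' : F.isWeq s') (he' : F.isFib e')
    (hse' : s' ≫ e' = prod.lift (𝟙 X) (𝟙 X)) :
    ∃ (P'' : C) (s'' : X ⟶ P'') (f₁ : P'' ⟶ P) (f₂ : P'' ⟶ P')
      (e'' : P'' ⟶ X ⨯ X),
      F.isWeq s'' ∧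
      F.isFib f₁ ∧ F.isWeq f₁ ∧
      F.isFib f₂ ∧ F.isWeq f₂ ∧
      F.isFib e'' ∧
      s'' ≫ f₁ = s ∧ s'' ≫ f₂ = s' ∧
      f₁ ≫ e = e'' ∧ f₂ ≫ e' = e'' ∧
      s'' ≫ e'' = prod.lift (𝟙 X) (𝟙 X) := by
  obtain ⟨W, p, q, hpb⟩ := F.base_change_exists e e' he'
  have hp : F.isFib p := F.fib_base_change e e' he' W p q hpb
  have hq : F.isFib q := F.fib_base_change e' e he W q p hpb.flip
  have ht : s ≫ e = s' ≫ e' := by rw [hse, hse']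
  set t : X ⟶ W := hpb.lift s s' ht with htdef
  have htp : t ≫ p = s := hpb.lift_fst s s' ht
  have htq : t ≫ q = s' := hpb.lift_snd s s' ht
  obtain ⟨P'', w, π, hw, hπ, hwπ⟩ := F.factorization t
  refine ⟨P'', w, π ≫ p, π ≫ q, π ≫ p ≫ e, hw, F.fib_comp π p hπ hp, ?_,
    F.fib_comp π q hπ hq, ?_, (by rw [← Category.assoc]; exact F.fib_comp (π ≫ p) e (F.fib_comp π p hπ hp) he), ?_, ?_,
    by simp, ?_, ?_⟩
  · have : w ≫ π ≫ p = s := by rw [← Category.assoc, hwπ, htp]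
    exact F.weq_right_of_comp w (π ≫ p) hw (this ▸ hs)
  · have : w ≫ π ≫ q = s' := by rw [← Category.assoc, hwπ, htq]
    exact F.weq_right_of_comp w (π ≫ q) hw (this ▸ hs')
  · rw [← Category.assoc, hwπ, htp]
  · rw [← Category.assoc, hwπ, htq]
  · rw [Category.assoc, ← hpb.w, ← Category.assoc]
  · rw [← Category.assoc, ← Category.assoc, hwπ, htp, hse]
end
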